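/- Let G be a finite group, H ≤ G of index 3, and ρ an irreducible complex H-representation of odd dimension d. Then either Ind_H^G ρ is irreducible (of dimension 3d), or ρ extends to a representation of G (i.e., some irreducible constituent of Ind_H^G ρ has dimension exactly d). -/

import Mathlib

open CategoryTheory Module
noncomputable section
namespace IndAux
variable {k : Type} [Field k] {Γ : Type} [Monoid Γ]

def Inv (V : FDRep k Γ) (p : Submodule k V) : Prop := ∀ (g : Γ), ∀ x ∈ p, V.ρ g x ∈ p

def subρ (V : FDRep k Γ) (p : Submodule k V) (hp : Inv V p) : Representation k Γ p where
  toFun g := (V.ρ g).restrict (fun x hx => hp g x hx)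
  map_one' := by ext x; simp
  map_mul' g h := by ext x; simp [LinearMap.restrict_apply]

def sub (V : FDRep k Γ) (p : Submodule k V) (hp : Inv V p) : FDRep k Γ := FDRep.of (subρ V p hp)

lemma finrank_sub (V : FDRep k Γ) (p : Submodule k V) (hp : Inv V p) :
    finrank k (sub V p hp) = finrank k p := rfl

def incl (V : FDRep k Γ) (p : Submodule k V) (hp : Inv V p) : sub V p hp ⟶ V where
  hom := FGModuleCat.ofHom p.subtype
  comm _ := rfl

lemma incl_hom (V : FDRep k Γ) (p : Submodule k V) (hp : Inv V p) :
    ConcreteCategory.hom (C := FGModuleCat _) (incl V p hp).hom = p.subtype := rfl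

lemma hom_zero (V W : FDRep k Γ) : ConcreteCategory.hom (C := FGModuleCat _) (0 : V ⟶ W).hom = 0 := rfl

lemma comp_hom {U V W : FDRep k Γ} (f : U ⟶ V) (g : V ⟶ W) :
    ConcreteCategory.hom (C := FGModuleCat _) (f ≫ g).hom = ConcreteCategory.hom (C := FGModuleCat _) g.hom ∘ₗ ConcreteCategory.hom (C := FGModuleCat _) f.hom := rfl

lemma comm_apply {V W : FDRep k Γ} (f : V ⟶ W) (g : Γ) (x : V) :
    f.hom (V.ρ g x) = W.ρ g (f.hom x) := by
  have h := ConcreteCategory.congr_hom (f.comm g) x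
  rw [ConcreteCategory.comp_apply, ConcreteCategory.comp_apply] at h
  exact h

lemma ne_zero_iff {V W : FDRep k Γ} (f : V ⟶ W) :
    f ≠ 0 ↔ ConcreteCategory.hom (C := FGModuleCat _) f.hom ≠ 0 := by
  constructor
  · intro h hh; exact h (Action.Hom.ext (ConcreteCategory.hom_injective (hh.trans (hom_zero _ _).symm)))
  · intro h hh; exact h (by rw [hh]; rfl)

lemma ker_inv {V W : FDRep k Γ} (f : V ⟶ W) : Inv V (LinearMap.ker (ConcreteCategory.hom (C := FGModuleCat _) f.hom)) := by
  intro g x hx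
  have h2 := comm_apply f g x
  have h1 : f.hom x = 0 := hx
  refine LinearMap.mem_ker.mpr (h2.trans ?_)
  erw [h1]
  simp

lemma range_inv {V W : FDRep k Γ} (f : V ⟶ W) : Inv W (LinearMap.range (ConcreteCategory.hom (C := FGModuleCat _) f.hom)) := by
  rintro g x ⟨y, rfl⟩
  exact ⟨V.ρ g y, (comm_apply f g y)⟩

lemma mono_of_injective {V W : FDRep k Γ} (f : V ⟶ W) (h : Function.Injective f.hom) :
    Mono f := by
  constructor
  intro Z g₁ g₂ hg
  apply Action.Hom.ext
  have : g₁.hom ≫ f.hom = g₂.hom ≫ f.hom := congrArg Action.Hom.hom hg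
  ext x
  exact h (ConcreteCategory.congr_hom this x)

lemma injective_of_mono {V W : FDRep k Γ} (f : V ⟶ W) [Mono f] :
    Function.Injective f.hom := by
  rw [← LinearMap.ker_eq_bot]
  by_contra hk
  have h1 : incl V _ (ker_inv f) ≫ f = 0 ≫ f := by
    apply Action.Hom.ext
    apply ConcreteCategory.hom_injective
    rw [comp_hom, comp_hom, hom_zero]
    refine LinearMap.ext fun x => ?_
    simp only [LinearMap.comp_apply, LinearMap.zero_apply, map_zero]
    exact x.2
  have h2 := (cancel_mono f).mp h1
  apply hk
  ext x
  simp only [Submodule.mem_bot]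
  constructor
  · intro hx
    have : ConcreteCategory.hom (C := FGModuleCat _) (incl V _ (ker_inv f)).hom = ConcreteCategory.hom (C := FGModuleCat _) (0 : _ ⟶ V).hom :=
      congrArg (fun φ => ConcreteCategory.hom (C := FGModuleCat _) (Action.Hom.hom φ)) h2
    rw [incl_hom, hom_zero] at this
    exact congrArg (fun (φ : _ →ₗ[k] _) => (φ ⟨x, hx⟩ : V)) this
  · intro hx; simp [hx]

lemma isIso_of_bijective {V W : FDRep k Γ} (f : V ⟶ W) (h : Function.Bijective f.hom) :
    IsIso f := by
  let e : V ≃ₗ[k] W := LinearEquiv.ofBijective (ConcreteCategory.hom (C := FGModuleCat _) f.hom) h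
  refine ⟨⟨⟨FGModuleCat.ofHom (e.symm : W →ₗ[k] V), fun g => ?_⟩, ?_, ?_⟩⟩
  · ext x
    apply e.injective
    show f.hom (e.symm ((W.ρ g) x)) = f.hom (V.ρ g (e.symm x))
    rw [comm_apply]
    show e (e.symm _) = W.ρ g (e (e.symm x))
    rw [e.apply_symm_apply, e.apply_symm_apply]
  · apply Action.Hom.ext; ext x; exact e.symm_apply_apply x
  · apply Action.Hom.ext; ext x; exact e.apply_symm_apply x

lemma bijective_of_isIso {V W : FDRep k Γ} (f : V ⟶ W) [IsIso f] :
    Function.Bijective f.hom := by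
  refine Function.bijective_iff_has_inverse.mpr ⟨(inv f).hom, fun x => ?_, fun x => ?_⟩
  · exact ConcreteCategory.congr_hom (congrArg Action.Hom.hom (IsIso.hom_inv_id f)) x
  · exact ConcreteCategory.congr_hom (congrArg Action.Hom.hom (IsIso.inv_hom_id f)) x


lemma inv_eq_bot_or_top {V : FDRep k Γ} (hV : Simple V) (p : Submodule k V) (hp : Inv V p) :
    p = ⊥ ∨ p = ⊤ := by
  by_cases hb : p = ⊥
  · exact Or.inl hb
  right
  obtain ⟨x, hx, hx0⟩ := Submodule.exists_mem_ne_zero_of_ne_bot hb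
  have hmono : Mono (incl V p hp) := mono_of_injective _ (by exact p.injective_subtype)
  have hne : incl V p hp ≠ 0 := by
    rw [ne_zero_iff, incl_hom]
    intro h
    exact hx0 (LinearMap.congr_fun h ⟨x, hx⟩)
  have : IsIso (incl V p hp) := isIso_of_mono_of_nonzero hne
  have hsurj := (bijective_of_isIso (incl V p hp)).2
  rw [eq_top_iff]
  intro y _
  obtain ⟨z, hz⟩ := hsurj y
  exact hz ▸ z.2

lemma simple_of_inv {V : FDRep k Γ} (h0 : 0 < finrank k V)
    (h : ∀ p : Submodule k V, Inv V p → p = ⊥ ∨ p = ⊤) : Simple V := by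
  have hnt : Nontrivial V := by
    exact Module.nontrivial_of_finrank_pos (R := k) h0
  refine ⟨fun {Y} f hm => ⟨fun hi => ?_, fun hf => ?_⟩⟩
  · intro h0'
    obtain ⟨v, hv⟩ := exists_ne (0 : V)
    obtain ⟨w, hw⟩ := (bijective_of_isIso f).2 v
    rw [h0', hom_zero] at hw
    exact hv (by simpa using hw.symm)
  · haveI := hm
    have hinj : Function.Injective f.hom := injective_of_mono f
    have hr := h (LinearMap.range (ConcreteCategory.hom (C := FGModuleCat _) f.hom)) (range_inv f)
    rcases hr with hr | hr
    · exact absurd (LinearMap.range_eq_bot.mp hr) ((ne_zero_iff f).mp hf)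
    · exact isIso_of_bijective f ⟨hinj, LinearMap.range_eq_top.mp hr⟩

lemma injective_of_simple_src {V W : FDRep k Γ} (hV : Simple V) (f : V ⟶ W) (hf : f ≠ 0) :
    Function.Injective f.hom := by
  rcases inv_eq_bot_or_top hV (LinearMap.ker (ConcreteCategory.hom (C := FGModuleCat _) f.hom)) (ker_inv f) with h | h
  · exact LinearMap.ker_eq_bot.mp h
  · exact absurd (LinearMap.ker_eq_top.mp h) ((ne_zero_iff f).mp hf)


lemma ne_zero_of_injective {V W : FDRep k Γ} (f : V ⟶ W) (hinj : Function.Injective f.hom)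
    (h0 : 0 < finrank k V) : f ≠ 0 := by
  rw [ne_zero_iff]
  intro h
  haveI := Module.nontrivial_of_finrank_pos (R := k) h0
  obtain ⟨v, hv⟩ := exists_ne (0 : V)
  exact hv (hinj (by rw [h]; rfl))

lemma finrank_le_of_injective {V W : FDRep k Γ} (f : V ⟶ W) (hinj : Function.Injective f.hom) :
    finrank k V ≤ finrank k W :=
  LinearMap.finrank_le_finrank_of_injective hinj

lemma exists_simple_sub (V : FDRep k Γ) (h0 : 0 < finrank k V) :
    ∃ (S : FDRep k Γ) (f : S ⟶ V), Simple S ∧ Function.Injective f.hom ∧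
      0 < finrank k S := by
  classical
  haveI := Module.nontrivial_of_finrank_pos (R := k) h0
  have hex : ∃ n, ∃ p : Submodule k V, Inv V p ∧ p ≠ ⊥ ∧ finrank k p = n :=
    ⟨finrank k (⊤ : Submodule k V), ⊤, fun g x _ => trivial, bot_lt_top.ne', rfl⟩
  obtain ⟨p, hpInv, hpb, hpn⟩ := Nat.find_spec hex
  have hp0 : 0 < finrank k p := by
    haveI : Nontrivial p := Submodule.nontrivial_iff_ne_bot.mpr hpb
    exact finrank_pos
  refine ⟨sub V p hpInv, incl V p hpInv, ?_, (by exact p.injective_subtype), hp0⟩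
  apply simple_of_inv (by exact hp0)
  intro q hq
  by_cases hqb : q = ⊥
  · exact Or.inl hqb
  right
  set q' : Submodule k V := q.map (ConcreteCategory.hom (C := FGModuleCat _) (incl V p hpInv).hom) with hq'
  have hq'Inv : Inv V q' := by
    rintro g x ⟨y, hy, rfl⟩
    exact ⟨(sub V p hpInv).ρ g y, hq g y hy, (comm_apply (incl V p hpInv) g y).symm⟩
  have hq'b : q' ≠ ⊥ := by
    obtain ⟨y, hy, hy0⟩ := Submodule.exists_mem_ne_zero_of_ne_bot hqb
    refine (Submodule.ne_bot_iff q').mpr ⟨(incl V p hpInv).hom y, ⟨y, hy, rfl⟩, ?_⟩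
    intro hz
    exact hy0 (Subtype.ext (hz : _ = (0 : V)))
  have hfr : finrank k q' = finrank k q :=
    (LinearEquiv.finrank_eq (Submodule.equivMapOfInjective _ (by exact p.injective_subtype) q)).symm
  have hmin : Nat.find hex ≤ finrank k q' := Nat.find_min' hex ⟨q', hq'Inv, hq'b, rfl⟩
  have hle : finrank k q ≤ finrank k (sub V p hpInv) := Submodule.finrank_le q
  apply Submodule.eq_top_of_finrank_eq
  have : finrank k (sub V p hpInv) = finrank k p := rfl
  omega


lemma rho_mul_apply (V : FDRep k Γ) (a b : Γ) (x : V) :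
    V.ρ (a * b) x = V.ρ a (V.ρ b x) := by
  rw [map_mul]; rfl

lemma exists_inv_compl {Γ' : Type} [Group Γ'] [Fintype Γ'] (V : FDRep ℂ Γ')
    (p : Submodule ℂ V) (hp : Inv V p) :
    ∃ q : Submodule ℂ V, Inv V q ∧ IsCompl p q := by
  classical
  obtain ⟨q₀, hq₀⟩ := p.exists_isCompl
  set π : V →ₗ[ℂ] V := p.subtype ∘ₗ (p.projectionOnto q₀ hq₀) with hπ
  have hπmem : ∀ x, π x ∈ p := fun x => (p.projectionOnto q₀ hq₀ x).2
  have hπid : ∀ x ∈ p, π x = x := by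
    intro x hx
    have := Submodule.linearProjOfIsCompl_apply_left hq₀ ⟨x, hx⟩
    simp only [hπ, LinearMap.comp_apply]
    exact congrArg Subtype.val this
  set T : V →ₗ[ℂ] V :=
    (Fintype.card Γ' : ℂ)⁻¹ • ∑ g : Γ', (V.ρ g) ∘ₗ π ∘ₗ (V.ρ g⁻¹) with hT
  have hcard : (Fintype.card Γ' : ℂ) ≠ 0 := Nat.cast_ne_zero.mpr Fintype.card_ne_zero
  have hTmem : ∀ x, T x ∈ p := by
    intro x
    simp only [hT, LinearMap.smul_apply, LinearMap.sum_apply, LinearMap.comp_apply]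
    exact Submodule.smul_mem _ _ (Submodule.sum_mem _ fun g _ => hp g _ (hπmem _))
  have hpt : ∀ (g : Γ') (x : V), x ∈ p → (V.ρ g) (π ((V.ρ g⁻¹) x)) = x := by
    intro g x hx
    rw [hπid _ (hp g⁻¹ x hx), ← rho_mul_apply, mul_inv_cancel, map_one]
    rfl
  have hTid : ∀ x ∈ p, T x = x := by
    intro x hx
    simp only [hT, LinearMap.smul_apply, LinearMap.sum_apply, LinearMap.comp_apply]
    rw [Finset.sum_congr rfl (fun g _ => hpt g x hx), Finset.sum_const, Finset.card_univ,
      ← Nat.cast_smul_eq_nsmul ℂ, smul_smul, inv_mul_cancel₀ hcard, one_smul]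
  have hTequiv : ∀ (h : Γ') (x : V), T ((V.ρ h) x) = (V.ρ h) (T x) := by
    intro h x
    simp only [hT, LinearMap.smul_apply, LinearMap.sum_apply, LinearMap.comp_apply, map_smul,
      map_sum]
    congr 1
    refine (Fintype.sum_bijective (fun g => h * g)
      ((Group.mulLeft_bijective h)) _ _ fun g => ?_).symm
    rw [mul_inv_rev, rho_mul_apply, rho_mul_apply, ← rho_mul_apply V h⁻¹ h,
      inv_mul_cancel, map_one]
    rfl
  refine ⟨LinearMap.ker T, ?_, ?_, ?_⟩
  · intro g x hx
    have hx' : T x = 0 := hx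
    have : T ((V.ρ g) x) = 0 := by rw [hTequiv, hx', map_zero]
    exact this
  · rw [Submodule.disjoint_def]
    intro x hxp hxq
    have hxq' : T x = 0 := hxq
    rw [← hTid x hxp, hxq']
  · rw [codisjoint_iff_le_sup]
    intro x _
    refine Submodule.mem_sup.mpr ⟨T x, hTmem x, x - T x, ?_, by abel⟩
    have : T (x - T x) = 0 := by
      rw [map_sub, hTid (T x) (hTmem x), sub_self]
    exact this

lemma injective_comp_incl {V : FDRep k Γ} (p : Submodule k V) (hp : Inv V p)
    {S : FDRep k Γ} (f : S ⟶ sub V p hp) (hf : Function.Injective f.hom) :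
    Function.Injective (f ≫ incl V p hp).hom := by
  rw [comp_hom]
  intro a b hab
  exact hf (Subtype.ext (hab : _))

end IndAux

end

open IndAux in
/-- Let `G` be a finite group, `H ≤ G` of index 3, and `ρ` an irreducible complex
`H`-representation of odd dimension `d` (`ind` denotes induction, tripling dimensions and
satisfying Frobenius reciprocity).  Then either `Ind ρ` is irreducible (of dimension `3d`),
or some irreducible constituent of `Ind ρ` has dimension exactly `d` (i.e. `ρ` extends). -/
theorem ind_odd_dim_irreducible_or_extends (G : Type) [Group G] [Fintype G] (H : Subgroup G)
    (hidx : H.index = 3)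
    (ind : FDRep ℂ H ⥤ FDRep ℂ G)
    (hdim : ∀ σ : FDRep ℂ H, Module.finrank ℂ (ind.obj σ) = 3 * Module.finrank ℂ σ)
    (hFrob : ∀ (σ : FDRep ℂ H) (R : FDRep ℂ G), Simple σ → Simple R →
      ((∃ f : σ ⟶ (Action.res (FGModuleCat ℂ) (H.subtype)).obj R, f ≠ 0) ↔
        (∃ g : R ⟶ ind.obj σ, g ≠ 0)))
    (ρ : FDRep ℂ H) (hρ : Simple ρ) (d : ℕ)
    (hd : Module.finrank ℂ ρ = d) (hodd : Odd d) :
    Simple (ind.obj ρ) ∨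
      ∃ R : FDRep ℂ G, Simple R ∧ (∃ g : R ⟶ ind.obj ρ, g ≠ 0) ∧
        Module.finrank ℂ R = d := by
  classical
  by_cases hns : Simple (ind.obj ρ)
  · exact Or.inl hns
  right
  obtain ⟨m, hm⟩ := hodd
  have hdM : finrank ℂ (ind.obj ρ) = 3 * d := by rw [hdim ρ, hd]
  have hM0 : 0 < finrank ℂ (ind.obj ρ) := by omega
  haveI : Fintype H := Fintype.ofFinite _
  -- Frobenius lower bound: every simple constituent has dimension ≥ d
  have dimge : ∀ (R : FDRep ℂ G), Simple R → (∃ g : R ⟶ ind.obj ρ, g ≠ 0) →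
      d ≤ finrank ℂ R := by
    intro R hR hg
    obtain ⟨f, hf⟩ := (hFrob ρ R hρ hR).mpr hg
    have hf' : f ≠ 0 := hf
    have hinj := injective_of_simple_src hρ f hf'
    have hle : finrank ℂ ρ ≤
        finrank ℂ ((Action.res (FGModuleCat ℂ) (H.subtype)).obj R) :=
      finrank_le_of_injective f hinj
    have h1 : finrank ℂ ((Action.res (FGModuleCat ℂ) (H.subtype)).obj R)
        = finrank ℂ R := rfl
    omega
  -- key upper bound: any simple constituent of dimension > d satisfies 3d ≤ 2·dim
  have key : ∀ (S : FDRep ℂ G), Simple S → (∃ g : S ⟶ ind.obj ρ, g ≠ 0) →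
      d < finrank ℂ S → 3 * d ≤ 2 * finrank ℂ S := by
    intro S hS hg hlt
    obtain ⟨f, hf⟩ := (hFrob ρ S hρ hS).mpr hg
    have hf' : f ≠ 0 := hf
    have hinj := injective_of_simple_src hρ f hf'
    obtain ⟨y, hyInv, hyCompl⟩ := exists_inv_compl
      ((Action.res (FGModuleCat ℂ) (H.subtype)).obj S)
      (LinearMap.range (ConcreteCategory.hom (C := FGModuleCat _) f.hom)) (range_inv f)
    have hrk : finrank ℂ (LinearMap.range (ConcreteCategory.hom (C := FGModuleCat _) f.hom)) + finrank ℂ y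
        = finrank ℂ ((Action.res (FGModuleCat ℂ) (H.subtype)).obj S) :=
      Submodule.finrank_add_eq_of_isCompl hyCompl
    have hrr : finrank ℂ (LinearMap.range (ConcreteCategory.hom (C := FGModuleCat _) f.hom)) = d := by
      rw [LinearMap.finrank_range_of_inj hinj]; exact hd
    have hRSa : finrank ℂ ((Action.res (FGModuleCat ℂ) (H.subtype)).obj S)
        = finrank ℂ S := rfl
    have hy0 : 0 < finrank ℂ y := by omega
    obtain ⟨σ, fσ, hσ, hσinj, hσ0⟩ := exists_simple_sub
      (sub ((Action.res (FGModuleCat ℂ) (H.subtype)).obj S) y hyInv)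
      (by exact hy0)
    have hφinj := injective_comp_incl y hyInv fσ hσinj
    have hφ0 := ne_zero_of_injective _ hφinj hσ0
    obtain ⟨g2, hg2⟩ := (hFrob σ S hσ hS).mp
      ⟨fσ ≫ incl ((Action.res (FGModuleCat ℂ) (H.subtype)).obj S) y hyInv, hφ0⟩
    have hg2' : g2 ≠ 0 := hg2
    have hg2inj := injective_of_simple_src hS g2 hg2'
    have h1 : finrank ℂ S ≤ finrank ℂ (ind.obj σ) := finrank_le_of_injective g2 hg2inj
    have h2 : finrank ℂ (ind.obj σ) = 3 * finrank ℂ σ := hdim σ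
    have h3 : finrank ℂ σ ≤ finrank ℂ y := finrank_le_of_injective fσ hσinj
    omega
  -- first constituent
  obtain ⟨S₁, f₁, hS₁, hf₁inj, hS₁0⟩ := exists_simple_sub (ind.obj ρ) hM0
  have hf₁0 : f₁ ≠ 0 := ne_zero_of_injective f₁ hf₁inj hS₁0
  have ha₁d : d ≤ finrank ℂ S₁ := dimge S₁ hS₁ ⟨f₁, hf₁0⟩
  by_cases h₁ : finrank ℂ S₁ = d
  · exact ⟨S₁, hS₁, ⟨f₁, hf₁0⟩, h₁⟩
  have ha₁le : finrank ℂ S₁ ≤ 3 * d := by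
    have h : finrank ℂ S₁ ≤ finrank ℂ (ind.obj ρ) := finrank_le_of_injective f₁ hf₁inj
    exact h.trans hdM.le
  by_cases h₁' : finrank ℂ S₁ = 3 * d
  · exfalso
    have hsurj : Function.Surjective f₁.hom := by
      rw [← LinearMap.range_eq_top]
      apply Submodule.eq_top_of_finrank_eq
      rw [LinearMap.finrank_range_of_inj hf₁inj]
      exact h₁'.trans hdM.symm
    haveI := hS₁
    haveI : IsIso f₁ := isIso_of_bijective f₁ ⟨hf₁inj, hsurj⟩
    exact hns (Simple.of_iso (asIso f₁).symm)
  -- complement of the first constituent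
  obtain ⟨q₁, hq₁Inv, hq₁C⟩ := exists_inv_compl (ind.obj ρ) (LinearMap.range (ConcreteCategory.hom (C := FGModuleCat _) f₁.hom))
    (range_inv f₁)
  have hq₁rk : finrank ℂ (LinearMap.range (ConcreteCategory.hom (C := FGModuleCat _) f₁.hom)) + finrank ℂ q₁ = finrank ℂ (ind.obj ρ) :=
    Submodule.finrank_add_eq_of_isCompl hq₁C
  have hp₁rk : finrank ℂ (LinearMap.range (ConcreteCategory.hom (C := FGModuleCat _) f₁.hom)) = finrank ℂ S₁ :=
    LinearMap.finrank_range_of_inj hf₁inj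
  have hC₁rk : finrank ℂ (sub (ind.obj ρ) q₁ hq₁Inv) = finrank ℂ q₁ := rfl
  have hC₁0 : 0 < finrank ℂ (sub (ind.obj ρ) q₁ hq₁Inv) := by omega
  obtain ⟨S₂, f₂, hS₂, hf₂inj, hS₂0⟩ := exists_simple_sub (sub (ind.obj ρ) q₁ hq₁Inv) hC₁0
  have hg₂inj := injective_comp_incl q₁ hq₁Inv f₂ hf₂inj
  have hg₂0 : (f₂ ≫ incl (ind.obj ρ) q₁ hq₁Inv) ≠ 0 := ne_zero_of_injective _ hg₂inj hS₂0
  have ha₂d : d ≤ finrank ℂ S₂ := dimge S₂ hS₂ ⟨f₂ ≫ incl (ind.obj ρ) q₁ hq₁Inv, hg₂0⟩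
  by_cases h₂ : finrank ℂ S₂ = d
  · exact ⟨S₂, hS₂, ⟨f₂ ≫ incl (ind.obj ρ) q₁ hq₁Inv, hg₂0⟩, h₂⟩
  have ha₂le : finrank ℂ S₂ ≤ finrank ℂ (sub (ind.obj ρ) q₁ hq₁Inv) :=
    finrank_le_of_injective f₂ hf₂inj
  -- there is no room for a third constituent
  have hsum : finrank ℂ S₁ + finrank ℂ S₂ = 3 * d := by
    by_contra hne
    obtain ⟨q₂, hq₂Inv, hq₂C⟩ :=
      exists_inv_compl (sub (ind.obj ρ) q₁ hq₁Inv) (LinearMap.range (ConcreteCategory.hom (C := FGModuleCat _) f₂.hom)) (range_inv f₂)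
    have hq₂rk : finrank ℂ (LinearMap.range (ConcreteCategory.hom (C := FGModuleCat _) f₂.hom)) + finrank ℂ q₂
        = finrank ℂ (sub (ind.obj ρ) q₁ hq₁Inv) := Submodule.finrank_add_eq_of_isCompl hq₂C
    have hp₂rk : finrank ℂ (LinearMap.range (ConcreteCategory.hom (C := FGModuleCat _) f₂.hom)) = finrank ℂ S₂ :=
      LinearMap.finrank_range_of_inj hf₂inj
    have hC₂rk : finrank ℂ (sub (sub (ind.obj ρ) q₁ hq₁Inv) q₂ hq₂Inv) = finrank ℂ q₂ := rfl
    have hC₂0 : 0 < finrank ℂ (sub (sub (ind.obj ρ) q₁ hq₁Inv) q₂ hq₂Inv) := by omega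
    obtain ⟨S₃, f₃, hS₃, hf₃inj, hS₃0⟩ :=
      exists_simple_sub (sub (sub (ind.obj ρ) q₁ hq₁Inv) q₂ hq₂Inv) hC₂0
    have hg₃inj := injective_comp_incl q₁ hq₁Inv
      (f₃ ≫ incl (sub (ind.obj ρ) q₁ hq₁Inv) q₂ hq₂Inv)
      (injective_comp_incl q₂ hq₂Inv f₃ hf₃inj)
    have hg₃0 := ne_zero_of_injective _ hg₃inj hS₃0
    have h3d : d ≤ finrank ℂ S₃ := dimge S₃ hS₃
      ⟨(f₃ ≫ incl (sub (ind.obj ρ) q₁ hq₁Inv) q₂ hq₂Inv) ≫ incl (ind.obj ρ) q₁ hq₁Inv, hg₃0⟩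
    have h3le : finrank ℂ S₃ ≤ finrank ℂ (sub (sub (ind.obj ρ) q₁ hq₁Inv) q₂ hq₂Inv) :=
      finrank_le_of_injective f₃ hf₃inj
    omega
  -- both remaining constituents have dimension strictly between d and 2d: contradiction
  exfalso
  rcases le_total (finrank ℂ S₁) (finrank ℂ S₂) with hc | hc
  · have := key S₁ hS₁ ⟨f₁, hf₁0⟩ (by omega)
    omega
  · have := key S₂ hS₂ ⟨f₂ ≫ incl (ind.obj ρ) q₁ hq₁Inv, hg₂0⟩ (by omega)
    omega
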